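/- Let B be a complete ccc Boolean algebra and let U be a coherent P-ultrafilter on B. Let {F_n : n ∈ ℕ} be a countable family of ultrafilters on B with F_n ≠ U for all n, which is nowhere dense in the sense that for every nonzero b ∈ B there is a nonzero c ≤ b with c ∉ F_n for all n ∈ ℕ. Then there exists u ∈ U such that u ∉ F_n for every n ∈ ℕ. (Topologically: U is an untouchable point of the Stone space of B, i.e., U lies outside the closure of every countable nowhere dense set of ultrafilters not containing U.) -/

import Mathlib

open Cardinal Filter

variable {B : Type*}

/-- A partition of a Boolean algebra: a set of nonzero, pairwise disjoint
elements that is maximal (every nonzero element meets some member). -/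
def IsBPartition [BooleanAlgebra B] (P : Set B) : Prop :=
  ⊥ ∉ P ∧ (P.Pairwise fun a b => a ⊓ b = ⊥) ∧ ∀ b : B, b ≠ ⊥ → ∃ p ∈ P, b ⊓ p ≠ ⊥

/-- `P` refines `Q`: every member of `P` lies below some member of `Q`. -/
def BRefines [BooleanAlgebra B] (P Q : Set B) : Prop :=
  ∀ p ∈ P, ∃ q ∈ Q, p ≤ q

/-- A filter on a Boolean algebra. -/
def IsBFilter [BooleanAlgebra B] (F : Set B) : Prop :=
  ⊥ ∉ F ∧ ⊤ ∈ F ∧ (∀ a ∈ F, ∀ b : B, a ≤ b → b ∈ F) ∧ ∀ a ∈ F, ∀ b ∈ F, a ⊓ b ∈ F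

/-- An ultrafilter on a Boolean algebra. -/
def IsBUltrafilter [BooleanAlgebra B] (U : Set B) : Prop :=
  IsBFilter U ∧ ∀ b : B, b ∈ U ∨ bᶜ ∈ U

/-- The countable chain condition: every set of pairwise disjoint
nonzero elements is countable. -/
def BCCC (B : Type*) [BooleanAlgebra B] : Prop :=
  ∀ S : Set B, ⊥ ∉ S → (S.Pairwise fun a b => a ⊓ b = ⊥) → S.Countable

/-- A filter on ℕ, presented as a family of subsets of ℕ. -/
def IsNFilter (V : Set (Set ℕ)) : Prop :=
  ∅ ∉ V ∧ Set.univ ∈ V ∧ (∀ A ∈ V, ∀ C : Set ℕ, A ⊆ C → C ∈ V) ∧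
    ∀ A ∈ V, ∀ C ∈ V, A ∩ C ∈ V

/-- An ultrafilter on ℕ, presented as a family of subsets of ℕ. -/
def IsNUltrafilter (V : Set (Set ℕ)) : Prop :=
  IsNFilter V ∧ ∀ A : Set ℕ, A ∈ V ∨ Aᶜ ∈ V

/-- A P-point on ℕ: an ultrafilter such that for every partition of ℕ into
sets not in the ultrafilter there is a member meeting each piece finitely. -/
def IsPPointFamily (V : Set (Set ℕ)) : Prop :=
  IsNUltrafilter V ∧ ∀ A : ℕ → Set ℕ, (Pairwise fun m n => A m ∩ A n = ∅) →
    (⋃ n, A n) = Set.univ → (∀ n, A n ∉ V) → ∃ S ∈ V, ∀ n, (S ∩ A n).Finite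

/-- A selective ultrafilter on ℕ: for every partition of ℕ into sets not in
the ultrafilter there is a member meeting each piece in at most one point. -/
def IsSelectiveFamily (V : Set (Set ℕ)) : Prop :=
  IsNUltrafilter V ∧ ∀ A : ℕ → Set ℕ, (Pairwise fun m n => A m ∩ A n = ∅) →
    (⋃ n, A n) = Set.univ → (∀ n, A n ∉ V) → ∃ S ∈ V, ∀ n, (S ∩ A n).Subsingleton

/-- A coherent P-ultrafilter: an ultrafilter whose trace on every countably
infinite partition is a P-point on ℕ. -/
def IsCoherentPUltrafilter [CompleteBooleanAlgebra B] (U : Set B) : Prop :=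
  IsBUltrafilter U ∧ ∀ p : ℕ → B, Function.Injective p → IsBPartition (Set.range p) →
    IsPPointFamily {A : Set ℕ | (⨆ n ∈ A, p n) ∈ U}

/-- A coherent selective ultrafilter: an ultrafilter whose trace on every
countably infinite partition is a selective ultrafilter on ℕ. -/
def IsCoherentSelectiveUltrafilter [CompleteBooleanAlgebra B] (U : Set B) : Prop :=
  IsBUltrafilter U ∧ ∀ p : ℕ → B, Function.Injective p → IsBPartition (Set.range p) →
    IsSelectiveFamily {A : Set ℕ | (⨆ n ∈ A, p n) ∈ U}

/-- Atomless: every nonzero element properly contains a nonzero element. -/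
def BAtomless (B : Type*) [BooleanAlgebra B] : Prop :=
  ∀ b : B, b ≠ ⊥ → ∃ c : B, c ≠ ⊥ ∧ c < b

/-! ### Auxiliary lemmas -/

section Aux

lemma ult_mono [BooleanAlgebra B] {G : Set B} (hG : IsBUltrafilter G)
    {a b : B} (ha : a ∈ G) (hab : a ≤ b) : b ∈ G := hG.1.2.2.1 a ha b hab

lemma ult_not_mem_of_le [BooleanAlgebra B] {G : Set B} (hG : IsBUltrafilter G)
    {a b : B} (hab : a ≤ b) (hb : b ∉ G) : a ∉ G :=
  fun ha => hb (ult_mono hG ha hab)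

lemma ult_compl_iff [BooleanAlgebra B] {G : Set B} (hG : IsBUltrafilter G)
    {b : B} : bᶜ ∈ G ↔ b ∉ G := by
  constructor
  · intro hc hb
    have := hG.1.2.2.2 b hb bᶜ hc
    rw [inf_compl_eq_bot] at this
    exact hG.1.1 this
  · intro hb
    rcases hG.2 b with h | h
    · exact absurd h hb
    · exact h

lemma ult_sup_iff [BooleanAlgebra B] {G : Set B} (hG : IsBUltrafilter G)
    {a b : B} : a ⊔ b ∈ G ↔ a ∈ G ∨ b ∈ G := by
  constructor
  · intro h
    by_contra hcon
    push_neg at hcon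
    have ha := (ult_compl_iff hG).mpr hcon.1
    have hb := (ult_compl_iff hG).mpr hcon.2
    have h2 := hG.1.2.2.2 _ ha _ hb
    rw [← compl_sup] at h2
    exact ((ult_compl_iff hG).mp h2) h
  · rintro (h | h)
    · exact ult_mono hG h le_sup_left
    · exact ult_mono hG h le_sup_right

lemma ult_sSup_finite [CompleteBooleanAlgebra B] {G : Set B} (hG : IsBUltrafilter G)
    {S : Set B} (hfin : S.Finite) (h : sSup S ∈ G) : ∃ a ∈ S, a ∈ G := by
  refine Set.Finite.induction_on (motive := fun S _ => sSup S ∈ G → ∃ a ∈ S, a ∈ G) S hfin ?_ ?_ h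
  · intro h0; rw [sSup_empty] at h0; exact absurd h0 hG.1.1
  · intro a s _ _ ih hmem
    rw [sSup_insert] at hmem
    rcases (ult_sup_iff hG).mp hmem with h1 | h1
    · exact ⟨_, Set.mem_insert _ _, h1⟩
    · obtain ⟨x, hxS, hxG⟩ := ih h1
      exact ⟨x, Set.mem_insert_of_mem _ hxS, hxG⟩

section W
variable [CompleteBooleanAlgebra B] {p : ℕ → B}

lemma w_inter (hdisj : ∀ m n : ℕ, m ≠ n → p m ⊓ p n = ⊥) (A C : Set ℕ) :
    (⨆ n ∈ A ∩ C, p n) = (⨆ n ∈ A, p n) ⊓ (⨆ n ∈ C, p n) := by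
  refine le_antisymm (le_inf ?_ ?_) ?_
  · exact biSup_mono fun n hn => hn.1
  · exact biSup_mono fun n hn => hn.2
  · simp only [iSup_inf_eq, inf_iSup_eq]
    refine iSup_le fun m => iSup_le fun hm => iSup_le fun n => iSup_le fun hn => ?_
    rcases eq_or_ne n m with rfl | hne
    · simp only [inf_idem]
      exact le_biSup _ ⟨hn, hm⟩
    · rw [hdisj n m hne]
      exact bot_le

lemma w_maximal_univ
    (hmax : ∀ b : B, b ≠ ⊥ → ∃ m : ℕ, b ⊓ p m ≠ ⊥) :
    (⨆ n ∈ (Set.univ : Set ℕ), p n) = ⊤ := by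
  set s := ⨆ n ∈ (Set.univ : Set ℕ), p n with hs
  by_contra hne
  have hc : sᶜ ≠ ⊥ := by
    intro h
    exact hne (by simpa using congrArg compl h)
  obtain ⟨m, hm⟩ := hmax _ hc
  apply hm
  have hle : p m ≤ s := le_biSup _ (Set.mem_univ m)
  have hb : sᶜ ⊓ p m ≤ ⊥ := by
    calc sᶜ ⊓ p m ≤ sᶜ ⊓ s := inf_le_inf_left _ hle
      _ ≤ ⊥ := by simp
  exact le_bot_iff.mp hb

lemma w_compl (hdisj : ∀ m n : ℕ, m ≠ n → p m ⊓ p n = ⊥)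
    (hmax : ∀ b : B, b ≠ ⊥ → ∃ m : ℕ, b ⊓ p m ≠ ⊥) (A : Set ℕ) :
    (⨆ n ∈ Aᶜ, p n) = (⨆ n ∈ A, p n)ᶜ := by
  have h : IsCompl (⨆ n ∈ A, p n) (⨆ n ∈ Aᶜ, p n) := by
    refine isCompl_iff.mpr ⟨?_, ?_⟩
    · rw [disjoint_iff, ← w_inter hdisj, Set.inter_compl_self]
      simp
    · rw [codisjoint_iff, ← iSup_union, Set.union_compl_self]
      exact w_maximal_univ hmax
  exact h.compl_eq.symm

end W

/-- The basic "cube" determined by finitely many decisions. -/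
def bcube [BooleanAlgebra B] (d : ℕ → B) (n : ℕ) (s : ℕ → Bool) : B :=
  (Finset.range (n+1)).inf fun j => if s j then d j else (d j)ᶜ

lemma bcube_congr [BooleanAlgebra B] (d : ℕ → B) (n : ℕ) {s t : ℕ → Bool}
    (h : ∀ j < n + 1, s j = t j) : bcube d n s = bcube d n t := by
  unfold bcube
  refine Finset.inf_congr rfl fun j hj => ?_
  rw [h j (Finset.mem_range.mp hj)]

lemma bcube_le [BooleanAlgebra B] (d : ℕ → B) {n j : ℕ} (s : ℕ → Bool) (h : j < n + 1) :
    bcube d n s ≤ if s j then d j else (d j)ᶜ :=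
  Finset.inf_le (Finset.mem_range.mpr h)

lemma bcube_sup [CompleteBooleanAlgebra B] (d : ℕ → B) (n : ℕ) :
    (⨆ s : ℕ → Bool, bcube d n s) = ⊤ := by
  induction n with
  | zero =>
    refine top_unique ?_
    have h1 : bcube d 0 (fun _ => true) = d 0 := by simp [bcube]
    have h2 : bcube d 0 (fun _ => false) = (d 0)ᶜ := by simp [bcube]
    calc (⊤ : B) = d 0 ⊔ (d 0)ᶜ := (sup_compl_eq_top).symm
      _ ≤ _ := sup_le (h1 ▸ le_iSup _ _) (h2 ▸ le_iSup _ _)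
  | succ n ih =>
    refine top_unique ?_
    have key : ∀ (b : Bool) (s : ℕ → Bool),
        (if b then d (n+1) else (d (n+1))ᶜ) ⊓ bcube d n s
          ≤ ⨆ t : ℕ → Bool, bcube d (n+1) t := by
      intro b s
      have heq : (if b then d (n+1) else (d (n+1))ᶜ) ⊓ bcube d n s
          = bcube d (n+1) (Function.update s (n+1) b) := by
        have h1 : bcube d (n+1) (Function.update s (n+1) b)
            = (if (Function.update s (n+1) b) (n+1) then d (n+1) else (d (n+1))ᶜ)
              ⊓ bcube d n (Function.update s (n+1) b) := by
          rw [bcube, bcube, Finset.range_add_one, Finset.inf_insert]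
        rw [h1, Function.update_self]
        congr 1
        refine bcube_congr d n fun j hj => ?_
        rw [Function.update_of_ne (by omega)]
      rw [heq]
      exact le_iSup _ _
    calc (⊤ : B) = (d (n+1) ⊔ (d (n+1))ᶜ) ⊓ ⨆ s : ℕ → Bool, bcube d n s := by
          rw [ih, sup_compl_eq_top, top_inf_eq]
      _ = (d (n+1) ⊓ ⨆ s : ℕ → Bool, bcube d n s)
          ⊔ ((d (n+1))ᶜ ⊓ ⨆ s : ℕ → Bool, bcube d n s) := inf_sup_right _ _ _
      _ = (⨆ s : ℕ → Bool, d (n+1) ⊓ bcube d n s)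
          ⊔ (⨆ s : ℕ → Bool, (d (n+1))ᶜ ⊓ bcube d n s) := by rw [inf_iSup_eq, inf_iSup_eq]
      _ ≤ _ := by
          refine sup_le (iSup_le fun s => ?_) (iSup_le fun s => ?_)
          · simpa using key true s
          · simpa using key false s

lemma exists_nat_enum {α : Type*} {s : Set α} (hc : s.Countable) (hi : s.Infinite) :
    ∃ f : ℕ → α, Function.Injective f ∧ Set.range f = s := by
  haveI := hc.to_subtype
  haveI := hi.to_subtype
  obtain ⟨d⟩ := nonempty_denumerable ↥s
  let e := Denumerable.eqv ↥s
  refine ⟨fun n => (e.symm n : α), ?_, ?_⟩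
  · intro m n h
    exact e.symm.injective (Subtype.val_injective h)
  · have : (fun n => (e.symm n : α)) = Subtype.val ∘ e.symm := rfl
    rw [this, Set.range_comp, Equiv.range_eq_univ, Set.image_univ, Subtype.range_coe]

lemma exists_max_disjoint {B : Type*} [BooleanAlgebra B] (T : Set B) (hT : ⊥ ∉ T) :
    ∃ Q : Set B, Q ⊆ T ∧ (Q.Pairwise fun a b => a ⊓ b = ⊥) ∧
      ∀ b ∈ T, ∃ q ∈ Q, b ⊓ q ≠ ⊥ := by
  have hch : ∀ c ⊆ {Q : Set B | Q ⊆ T ∧ Q.Pairwise fun a b => a ⊓ b = ⊥},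
      IsChain (· ⊆ ·) c → ∃ ub ∈ {Q : Set B | Q ⊆ T ∧ Q.Pairwise fun a b => a ⊓ b = ⊥},
        ∀ s ∈ c, s ⊆ ub := by
    intro c hc hchain
    refine ⟨⋃₀ c, ⟨fun x hx => ?_, fun a ha b hb hne => ?_⟩, fun s hs => Set.subset_sUnion_of_mem hs⟩
    · obtain ⟨s, hs, hxs⟩ := hx
      exact (hc hs).1 hxs
    · obtain ⟨s1, hs1, ha1⟩ := ha
      obtain ⟨s2, hs2, hb2⟩ := hb
      rcases hchain.total hs1 hs2 with h | h
      · exact (hc hs2).2 (h ha1) hb2 hne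
      · exact (hc hs1).2 ha1 (h hb2) hne
  obtain ⟨Q, hQ⟩ := zorn_subset _ hch
  refine ⟨Q, hQ.prop.1, hQ.prop.2, fun b hb => ?_⟩
  by_contra hcon
  push_neg at hcon
  have hbQ : b ∉ Q := by
    intro hbQ
    have := hcon b hbQ
    rw [inf_idem] at this
    exact hT (this ▸ hb)
  have hpair : (insert b Q).Pairwise fun a b => a ⊓ b = ⊥ := by
    refine Set.Pairwise.insert hQ.prop.2 fun q hq hne => ?_
    refine ⟨hcon q hq, ?_⟩
    rw [inf_comm]
    exact hcon q hq
  have hmem : insert b Q ∈ {Q : Set B | Q ⊆ T ∧ Q.Pairwise fun a b => a ⊓ b = ⊥} :=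
    ⟨Set.insert_subset hb hQ.prop.1, hpair⟩
  have hsub := hQ.2 hmem (Set.subset_insert b Q)
  exact hbQ (hsub (Set.mem_insert b Q))

end Aux

/-- A coherent P-ultrafilter is an untouchable point of the Stone space: it
avoids the closure of every countable nowhere dense set of other
ultrafilters. -/
theorem coherentP_is_untouchable [CompleteBooleanAlgebra B]
    (hcc : BCCC B) (U : Set B) (hU : IsCoherentPUltrafilter U)
    (F : ℕ → Set B) (hF : ∀ n, IsBUltrafilter (F n)) (hne : ∀ n, F n ≠ U)
    (hnwd : ∀ b : B, b ≠ ⊥ → ∃ c : B, c ≠ ⊥ ∧ c ≤ b ∧ ∀ n, c ∉ F n) :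
    ∃ u ∈ U, ∀ n, u ∉ F n := by
  classical
  have hUu : IsBUltrafilter U := hU.1
  set T : Set B := {c | c ≠ ⊥ ∧ ∀ n, c ∉ F n} with hTdef
  have hbotT : ⊥ ∉ T := fun h => h.1 rfl
  obtain ⟨Q, hQT, hQpair, hQmax⟩ := exists_max_disjoint T hbotT
  have hQmax' : ∀ b : B, b ≠ ⊥ → ∃ q ∈ Q, b ⊓ q ≠ ⊥ := by
    intro b hb
    obtain ⟨c, hc0, hcb, hcF⟩ := hnwd b hb
    obtain ⟨q', hqQ, hq⟩ := hQmax c ⟨hc0, hcF⟩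
    refine ⟨q', hqQ, fun h => hq ?_⟩
    have : c ⊓ q' ≤ b ⊓ q' := inf_le_inf_right q' hcb
    rw [h] at this
    exact le_bot_iff.mp this
  have hQbot : ⊥ ∉ Q := fun h => hbotT (hQT h)
  have hQcount : Q.Countable := hcc Q hQbot hQpair
  by_cases hQfin : Q.Finite
  · -- finite case
    have hsSupQ : sSup Q = ⊤ := by
      by_contra hne'
      have h0 : (sSup Q)ᶜ ≠ ⊥ := fun h => hne' (by simpa using congrArg compl h)
      obtain ⟨q', hqQ, hq⟩ := hQmax' _ h0
      apply hq
      have h1 : (sSup Q)ᶜ ⊓ q' ≤ (sSup Q)ᶜ ⊓ sSup Q := inf_le_inf_left _ (le_sSup hqQ)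
      rw [compl_inf_eq_bot] at h1
      exact le_bot_iff.mp h1
    have htop : sSup Q ∈ U := by rw [hsSupQ]; exact hUu.1.2.1
    obtain ⟨q', hqQ, hqU⟩ := ult_sSup_finite hUu hQfin htop
    exact ⟨q', hqU, (hQT hqQ).2⟩
  -- infinite case
  have hQinf : Q.Infinite := hQfin
  obtain ⟨q, hqinj, hqran⟩ := exists_nat_enum hQcount hQinf
  have hqT : ∀ n, q n ∈ T := fun n => hQT (hqran ▸ Set.mem_range_self n)
  have hq0 : ∀ n, q n ≠ ⊥ := fun n => (hqT n).1
  have hqdisj : ∀ m n : ℕ, m ≠ n → q m ⊓ q n = ⊥ := by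
    intro m n hmn
    refine hQpair (hqran ▸ Set.mem_range_self m) (hqran ▸ Set.mem_range_self n) ?_
    exact fun h => hmn (hqinj h)
  -- choose witnesses separating U from each F k
  have hd : ∀ k, ∃ e : B, e ∈ U ∧ e ∉ F k := by
    intro k
    by_contra hcon
    push_neg at hcon
    apply hne k
    ext b
    constructor
    · intro hb
      by_contra hbU
      have h1 : bᶜ ∈ U := (ult_compl_iff hUu).mpr hbU
      have h2 : bᶜ ∈ F k := hcon _ h1
      have h3 := (hF k).1.2.2.2 _ hb _ h2
      rw [inf_compl_eq_bot] at h3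
      exact (hF k).1.1 h3
    · exact fun hb => hcon b hb
  choose d hdU hdF using hd
  -- the refined partition
  set P : Set B := {b | b ≠ ⊥ ∧ ∃ n s, b = q n ⊓ bcube d n s} with hPdef
  have hqsplit : ∀ n, q n = ⨆ s : ℕ → Bool, q n ⊓ bcube d n s := by
    intro n
    rw [← inf_iSup_eq, bcube_sup, inf_top_eq]
  have hPexists : ∀ n, ∃ s : ℕ → Bool, q n ⊓ bcube d n s ≠ ⊥ := by
    intro n
    by_contra h
    push_neg at h
    apply hq0 n
    rw [hqsplit n]
    simp only [h, iSup_bot]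
  have hPpair : P.Pairwise fun a b => a ⊓ b = ⊥ := by
    rintro a ⟨ha0, n, s, rfl⟩ b ⟨hb0, m, t, rfl⟩ hab
    rcases eq_or_ne n m with rfl | hnm
    · by_cases hst : ∀ j < n + 1, s j = t j
      · exact absurd (by rw [bcube_congr d n hst]) hab
      · push_neg at hst
        obtain ⟨j, hj, hsj⟩ := hst
        have h1 := bcube_le d s hj
        have h2 := bcube_le d t hj
        have hcc' : bcube d n s ⊓ bcube d n t = ⊥ := by
          cases hs' : s j <;> cases ht' : t j
          · rw [hs', ht'] at hsj; exact absurd rfl hsj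
          · rw [hs'] at h1; rw [ht'] at h2
            simp only [Bool.false_eq_true, if_false, if_true] at h1 h2
            have := inf_le_inf h1 h2
            rw [compl_inf_eq_bot] at this
            exact le_bot_iff.mp this
          · rw [hs'] at h1; rw [ht'] at h2
            simp only [Bool.false_eq_true, if_false, if_true] at h1 h2
            have := inf_le_inf h1 h2
            rw [inf_compl_eq_bot] at this
            exact le_bot_iff.mp this
          · rw [hs', ht'] at hsj; exact absurd rfl hsj
        have hle : (q n ⊓ bcube d n s) ⊓ (q n ⊓ bcube d n t)
            ≤ bcube d n s ⊓ bcube d n t := inf_le_inf inf_le_right inf_le_right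
        rw [hcc'] at hle
        exact le_bot_iff.mp hle
    · have hle : (q n ⊓ bcube d n s) ⊓ (q m ⊓ bcube d m t) ≤ q n ⊓ q m :=
        inf_le_inf inf_le_left inf_le_left
      rw [hqdisj n m hnm] at hle
      exact le_bot_iff.mp hle
  have hPinf : P.Infinite := by
    choose s0 hs0 using hPexists
    apply Set.infinite_of_injective_forall_mem
      (f := fun n => q n ⊓ bcube d n (s0 n)) (s := P) ?_ ?_
    · intro n m h
      by_contra hnm
      have h' : q n ⊓ bcube d n (s0 n) = q m ⊓ bcube d m (s0 m) := h
      have hle : q n ⊓ bcube d n (s0 n) ≤ q n ⊓ q m := by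
        refine le_inf inf_le_left ?_
        rw [h']
        exact inf_le_left
      rw [hqdisj n m hnm] at hle
      exact hs0 n (le_bot_iff.mp hle)
    · exact fun n => ⟨hs0 n, n, s0 n, rfl⟩
  have hPcount : P.Countable := by
    have hsub : P ⊆ Set.range (fun i : (Σ n : ℕ, Fin (n+1) → Bool) =>
        q i.1 ⊓ bcube d i.1 (fun j => if h : j < i.1 + 1 then i.2 ⟨j, h⟩ else false)) := by
      rintro b ⟨hb0, n, s, rfl⟩
      refine ⟨⟨n, fun j => s j.1⟩, ?_⟩
      show q n ⊓ bcube d n (fun j => if h : j < n + 1 then s j else false)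
        = q n ⊓ bcube d n s
      congr 1
      refine bcube_congr d n fun j hj => ?_
      rw [dif_pos hj]
    exact (Set.countable_range _).mono hsub
  obtain ⟨p, hpinj, hpran⟩ := exists_nat_enum hPcount hPinf
  have hpP : ∀ m, p m ∈ P := fun m => hpran ▸ Set.mem_range_self m
  have hpavoid : ∀ m j, p m ∉ F j := by
    intro m j hmem
    obtain ⟨h0, n, s, heq⟩ := hpP m
    have hle : p m ≤ q n := heq ▸ inf_le_left
    exact (hqT n).2 j ((hF j).1.2.2.1 _ hmem _ hle)
  have hdisj' : ∀ m n : ℕ, m ≠ n → p m ⊓ p n = ⊥ := by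
    intro m n h
    exact hPpair (hpP m) (hpP n) (fun he => h (hpinj he))
  have hpart : IsBPartition (Set.range p) := by
    refine ⟨?_, ?_, ?_⟩
    · rw [hpran]
      exact fun h => h.1 rfl
    · rw [hpran]
      exact hPpair
    · intro b hb
      obtain ⟨q', hqQ, hmeet⟩ := hQmax' b hb
      obtain ⟨n, rfl⟩ := hqran ▸ hqQ
      have hsup : b ⊓ q n = ⨆ s : ℕ → Bool, b ⊓ (q n ⊓ bcube d n s) := by
        conv_lhs => rw [hqsplit n]
        rw [inf_iSup_eq]
      have : ∃ s : ℕ → Bool, b ⊓ (q n ⊓ bcube d n s) ≠ ⊥ := by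
        by_contra h
        push_neg at h
        apply hmeet
        rw [hsup]
        simp only [h, iSup_bot]
      obtain ⟨s, hs⟩ := this
      have hpc0 : q n ⊓ bcube d n s ≠ ⊥ := by
        intro h
        rw [h, inf_bot_eq] at hs
        exact hs rfl
      refine ⟨q n ⊓ bcube d n s, ?_, hs⟩
      rw [hpran]
      exact ⟨hpc0, n, s, rfl⟩
  have hmax' : ∀ b : B, b ≠ ⊥ → ∃ m : ℕ, b ⊓ p m ≠ ⊥ := by
    intro b hb
    obtain ⟨x, hx, hbx⟩ := hpart.2.2 b hb
    obtain ⟨m, rfl⟩ := hx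
    exact ⟨m, hbx⟩
  -- the trace
  have hPP := hU.2 p hpinj hpart
  set V : Set (Set ℕ) := {A : Set ℕ | (⨆ n ∈ A, p n) ∈ U} with hVdef
  have hNF : IsNFilter V := hPP.1.1
  have hwU_fin : ∀ A : Set ℕ, A.Finite → (⨆ n ∈ A, p n) ∈ U → ∃ m ∈ A, p m ∈ U := by
    intro A hfin h
    rw [← sSup_image] at h
    obtain ⟨a, ⟨m, hm, rfl⟩, haU⟩ := ult_sSup_finite hUu (hfin.image p) h
    exact ⟨m, hm, haU⟩
  have hwF_fin : ∀ (j : ℕ) (A : Set ℕ), A.Finite → (⨆ n ∈ A, p n) ∉ F j := by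
    intro j A hfin h
    rw [← sSup_image] at h
    obtain ⟨a, ⟨m, hm, rfl⟩, haF⟩ := ult_sSup_finite (hF j) (hfin.image p) h
    exact hpavoid m j haF
  by_cases hwin : ∃ m, p m ∈ U
  · obtain ⟨m, hm⟩ := hwin
    exact ⟨p m, hm, fun j => hpavoid m j⟩
  push_neg at hwin
  -- the index sets
  set C : ℕ → Set ℕ := fun k => {m | p m ≤ d k} with hCdef
  set Bad : ℕ → Set ℕ := fun k => {m | ¬ p m ≤ d k ∧ ¬ p m ≤ (d k)ᶜ} with hBaddef
  have hBadfin : ∀ k, (Bad k).Finite := by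
    intro k
    have hVk : (⋃ n ∈ Finset.range k, Set.range (fun s : Fin (n+1) → Bool =>
        q n ⊓ bcube d n (fun j => if h : j < n + 1 then s ⟨j, h⟩ else false))).Finite :=
      Set.Finite.biUnion (Finset.range k).finite_toSet fun n _ => Set.finite_range _
    refine (hVk.preimage hpinj.injOn).subset ?_
    intro m hm
    obtain ⟨h0, n, s, heq⟩ := hpP m
    have hnk : n < k := by
      by_contra hge
      push_neg at hge
      have hk1 : k < n + 1 := by omega
      have hle : p m ≤ if s k then d k else (d k)ᶜ := by
        rw [heq]
        exact inf_le_right.trans (bcube_le d s hk1)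
      cases hsk : s k
      · rw [hsk] at hle
        simp only [Bool.false_eq_true, if_false] at hle
        exact hm.2 hle
      · rw [hsk] at hle
        simp only [if_true] at hle
        exact hm.1 hle
    simp only [Set.mem_preimage, Set.mem_iUnion]
    refine ⟨n, Finset.mem_range.mpr hnk, ⟨fun j => s j.1, ?_⟩⟩
    show q n ⊓ bcube d n (fun j => if h : j < n + 1 then s j else false) = p m
    rw [heq]
    congr 1
    refine bcube_congr d n fun j hj => ?_
    rw [dif_pos hj]
  have hCd : ∀ k, (⨆ m ∈ C k, p m) ≤ d k := by
    intro k
    exact iSup₂_le fun m hm => hm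
  have hCU : ∀ k, C k ∈ V := by
    intro k
    have htop : (⨆ n : ℕ, p n) = ⊤ := by
      have := w_maximal_univ hmax'
      rwa [iSup_univ] at this
    have hdec : d k ≤ (⨆ m ∈ C k, p m) ⊔ (⨆ m ∈ Bad k, p m) := by
      conv_lhs => rw [← inf_top_eq (d k), ← htop, inf_iSup_eq]
      refine iSup_le fun n => ?_
      by_cases h1 : p n ≤ d k
      · exact le_sup_of_le_left (inf_le_right.trans (le_biSup _ h1))
      · by_cases h2 : p n ≤ (d k)ᶜ
        · have : d k ⊓ p n ≤ d k ⊓ (d k)ᶜ := inf_le_inf_left _ h2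
          rw [inf_compl_eq_bot] at this
          exact this.trans bot_le
        · exact le_sup_of_le_right (inf_le_right.trans (le_biSup _ ⟨h1, h2⟩))
    have hsup : (⨆ m ∈ C k, p m) ⊔ (⨆ m ∈ Bad k, p m) ∈ U := ult_mono hUu (hdU k) hdec
    rcases (ult_sup_iff hUu).mp hsup with h | h
    · exact h
    · obtain ⟨m, _, hmU⟩ := hwU_fin _ (hBadfin k) h
      exact absurd hmU (hwin m)
  -- the decreasing sequence
  set G : ℕ → Set ℕ := fun k => ⋂ j ∈ Set.Iic k, C j with hGdef
  have hGC : ∀ k, G k ⊆ C k := fun k => Set.biInter_subset_of_mem (Set.mem_Iic.mpr le_rfl)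
  have hGanti : ∀ j k, j ≤ k → G k ⊆ G j := by
    intro j k hjk
    refine Set.biInter_mono (fun x hx => Set.mem_Iic.mpr ((Set.mem_Iic.mp hx).trans hjk)) ?_
    exact fun x _ => le_rfl
  have hGsucc : ∀ k, G (k+1) = C (k+1) ∩ G k := by
    intro k
    have : Set.Iic (k+1) = insert (k+1) (Set.Iic k) := by
      ext x
      simp only [Set.mem_Iic, Set.mem_insert_iff]
      omega
    rw [hGdef]
    simp only
    rw [this, Set.biInter_insert]
  have hGV : ∀ k, G k ∈ V := by
    intro k
    induction k with
    | zero =>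
      have : G 0 = C 0 := by
        rw [hGdef]
        simp only
        have : Set.Iic (0:ℕ) = {0} := by
          ext x; simp only [Set.mem_Iic, Set.mem_singleton_iff]; omega
        rw [this, Set.biInter_singleton]
      rw [this]
      exact hCU 0
    | succ k ih =>
      rw [hGsucc k]
      exact hNF.2.2.2 _ (hCU (k+1)) _ ih
  have hGF : ∀ k, (⨆ m ∈ G k, p m) ∉ F k := by
    intro k
    refine ult_not_mem_of_le (hF k) ?_ (hdF k)
    exact (biSup_mono (hGC k)).trans (hCd k)
  -- obtain the pseudointersection
  have hmain : ∃ S : Set ℕ, S ∈ V ∧ ∀ k, (S \ G k).Finite := by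
    by_cases hcap : (⋂ k, G k) ∈ V
    · refine ⟨⋂ k, G k, hcap, fun k => ?_⟩
      have : (⋂ j, G j) \ G k = ∅ := Set.diff_eq_empty.mpr (Set.iInter_subset G k)
      rw [this]
      exact Set.finite_empty
    · set A : ℕ → Set ℕ := fun j => match j with
        | 0 => ⋂ k, G k
        | 1 => (G 0)ᶜ
        | (i+2) => G i ∩ (G (i+1))ᶜ with hAdef
      have hA0 : ∀ k, A 0 ⊆ G k := fun k => Set.iInter_subset G k
      have hAdisj : ∀ m n, m < n → ∀ x, x ∈ A m → x ∈ A n → False := by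
        intro m n hmn x hxm hxn
        match m, n, hmn with
        | 0, 1, _ => exact hxn (hA0 0 hxm)
        | 0, (i+2), _ => exact hxn.2 (hA0 (i+1) hxm)
        | 1, (i+2), _ => exact hxm (hGanti 0 i (Nat.zero_le i) hxn.1)
        | (i+2), (j+2), h =>
          have hij : i + 1 ≤ j := by omega
          exact hxm.2 (hGanti (i+1) j hij hxn.1)
      have hApair : Pairwise fun m n => A m ∩ A n = ∅ := by
        intro m n hmn
        rcases lt_or_gt_of_ne hmn with h | h
        · ext x
          simp only [Set.mem_inter_iff, Set.mem_empty_iff_false, iff_false, not_and]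
          exact fun h1 h2 => hAdisj m n h x h1 h2
        · ext x
          simp only [Set.mem_inter_iff, Set.mem_empty_iff_false, iff_false, not_and]
          exact fun h1 h2 => hAdisj n m h x h2 h1
      have hAunion : (⋃ j, A j) = Set.univ := by
        ext x
        simp only [Set.mem_iUnion, Set.mem_univ, iff_true]
        by_cases hx : ∀ k, x ∈ G k
        · exact ⟨0, Set.mem_iInter.mpr hx⟩
        · push_neg at hx
          have hk := Nat.find_spec hx
          rcases hk0 : Nat.find hx with _ | i
          · rw [hk0] at hk
            exact ⟨1, hk⟩
          · have hxi : x ∈ G i := by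
              by_contra hxi
              have := Nat.find_min hx (m := i) (by omega)
              exact this hxi
            rw [hk0] at hk
            exact ⟨i + 2, ⟨hxi, hk⟩⟩
      have hAnotV : ∀ j, A j ∉ V := by
        intro j hj
        match j with
        | 0 => exact hcap hj
        | 1 =>
          have h1 := hNF.2.2.2 _ (hGV 0) _ hj
          rw [Set.inter_compl_self] at h1
          exact hNF.1 h1
        | (i+2) =>
          have h1 := hNF.2.2.2 _ (hGV (i+1)) _ hj
          have h2 : G (i+1) ∩ (G i ∩ (G (i+1))ᶜ) = ∅ := by
            ext x
            simp only [Set.mem_inter_iff, Set.mem_compl_iff, Set.mem_empty_iff_false,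
              iff_false, not_and]
            tauto
          rw [h2] at h1
          exact hNF.1 h1
      obtain ⟨S, hSV, hSA⟩ := hPP.2 A hApair hAunion hAnotV
      refine ⟨S, hSV, fun k => ?_⟩
      have hsub : S \ G k ⊆ ⋃ j ∈ Finset.range (k+2), (S ∩ A j) := by
        intro x hx
        have hxA : ∃ j, x ∈ A j := by
          have : x ∈ ⋃ j, A j := hAunion ▸ Set.mem_univ x
          exact Set.mem_iUnion.mp this
        obtain ⟨j, hj⟩ := hxA
        have hjlt : j < k + 2 := by
          match j, hj with
          | 0, hj => exact absurd (hA0 k hj) hx.2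
          | 1, hj => omega
          | (i+2), hj =>
            have hik : i < k := by
              by_contra hge
              push_neg at hge
              exact hx.2 (hGanti k i hge hj.1)
            omega
        simp only [Set.mem_iUnion]
        exact ⟨j, Finset.mem_range.mpr hjlt, hx.1, hj⟩
      exact ((Set.Finite.biUnion (Finset.range (k+2)).finite_toSet
        (fun j _ => hSA j)).subset hsub)
  obtain ⟨S, hSV, hSfin⟩ := hmain
  refine ⟨⨆ n ∈ S, p n, hSV, fun k => ?_⟩
  -- show the supremum avoids F k
  set E : Set ℕ := S \ G k with hEdef
  have hEfin : E.Finite := hSfin k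
  have h2 : (⨆ m ∈ (G k)ᶜ, p m) ∈ F k := by
    rw [w_compl hdisj' hmax']
    exact (ult_compl_iff (hF k)).mpr (hGF k)
  have h3 : (G k)ᶜ = ((G k)ᶜ \ E) ∪ ((G k)ᶜ ∩ E) := (Set.diff_union_inter _ _).symm
  have h4 : (⨆ m ∈ (G k)ᶜ, p m)
      = (⨆ m ∈ (G k)ᶜ \ E, p m) ⊔ (⨆ m ∈ (G k)ᶜ ∩ E, p m) := by
    rw [← iSup_union, ← h3]
  have h5 : (⨆ m ∈ (G k)ᶜ ∩ E, p m) ∉ F k :=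
    hwF_fin k _ (hEfin.subset Set.inter_subset_right)
  have h6 : (⨆ m ∈ (G k)ᶜ \ E, p m) ∈ F k := by
    rw [h4] at h2
    rcases (ult_sup_iff (hF k)).mp h2 with h | h
    · exact h
    · exact absurd h h5
  have h7 : (G k)ᶜ \ E ⊆ Sᶜ := by
    intro x hx hxS
    exact hx.2 ⟨hxS, hx.1⟩
  have h8 : (⨆ m ∈ Sᶜ, p m) ∈ F k := ult_mono (hF k) h6 (biSup_mono h7)
  intro hmem
  have h9 := (hF k).1.2.2.2 _ hmem _ h8
  rw [← w_inter hdisj', Set.inter_compl_self] at h9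
  simp only [Set.mem_empty_iff_false, iSup_false, iSup_bot] at h9
  exact (hF k).1.1 h9
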